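/- In the setting of the fixed-design penalized least squares bound (GW condition with constant δ ∈ (0,1), restricted eigenvalue α² > 0 over the cone with parameter ξ = (1+δ)/(1−δ), subadditive penalty ρ with ρ(u) ≤ ρ'(0+)‖u‖₁), any global minimizer θ̂ satisfies the ℓ₁ bound ‖θ̂ − θ*‖₁ ≤ (2ξ(1+ξ)/α²) ρ'(0+) ‖θ*‖₀. -/

import Mathlib

open Matrix Finset

set_option maxHeartbeats 1000000

private lemma rho_nsmul (ρ : ℝ → ℝ) (hρ0 : ρ 0 = 0)
    (hρsub : ∀ x y : ℝ, 0 ≤ x → 0 ≤ y → ρ (x + y) ≤ ρ x + ρ y) :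
    ∀ (k : ℕ) (x : ℝ), 0 ≤ x → ρ ((k : ℝ) * x) ≤ (k : ℝ) * ρ x := by
  intro k
  induction k with
  | zero => intro x hx; simp [hρ0]
  | succ k ih =>
    intro x hx
    have h1 : ((k + 1 : ℕ) : ℝ) * x = (k : ℝ) * x + x := by push_cast; ring
    have h2 : ρ ((k : ℝ) * x + x) ≤ ρ ((k : ℝ) * x) + ρ x :=
      hρsub _ _ (by positivity) hx
    have h3 := ih x hx
    calc ρ (((k + 1 : ℕ) : ℝ) * x) = ρ ((k : ℝ) * x + x) := by rw [h1]
      _ ≤ ρ ((k : ℝ) * x) + ρ x := h2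
      _ ≤ (k : ℝ) * ρ x + ρ x := by linarith
      _ = ((k + 1 : ℕ) : ℝ) * ρ x := by push_cast; ring

/-- Key subadditivity consequence: `x * ρ a ≤ (a + x) * ρ x` for nonnegative `a, x`. -/
private lemma rho_ratio (ρ : ℝ → ℝ) (hρ0 : ρ 0 = 0) (hρnn : ∀ x, 0 ≤ ρ x)
    (hρsub : ∀ x y : ℝ, 0 ≤ x → 0 ≤ y → ρ (x + y) ≤ ρ x + ρ y)
    (hρmono : ∀ x y : ℝ, 0 ≤ x → x ≤ y → ρ x ≤ ρ y)
    (a x : ℝ) (ha : 0 ≤ a) (hx : 0 ≤ x) :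
    x * ρ a ≤ (a + x) * ρ x := by
  rcases eq_or_lt_of_le hx with hx0 | hxpos
  · simp [← hx0, hρ0]
  · have hdiv : 0 ≤ a / x := div_nonneg ha hx
    set k : ℕ := ⌈a / x⌉₊ with hk
    have hak : a ≤ (k : ℝ) * x := by
      have h1 : a / x ≤ (k : ℝ) := Nat.le_ceil _
      calc a = (a / x) * x := by field_simp
        _ ≤ (k : ℝ) * x := mul_le_mul_of_nonneg_right h1 hx
    have h2 : ρ a ≤ (k : ℝ) * ρ x := by
      calc ρ a ≤ ρ ((k : ℝ) * x) := hρmono _ _ ha hak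
        _ ≤ (k : ℝ) * ρ x := rho_nsmul ρ hρ0 hρsub k x hx
    have h3 : (k : ℝ) ≤ a / x + 1 := le_of_lt (Nat.ceil_lt_add_one hdiv)
    have h4 : ρ a ≤ (a / x + 1) * ρ x :=
      h2.trans (mul_le_mul_of_nonneg_right h3 (hρnn x))
    have h5 : x * ρ a ≤ x * ((a / x + 1) * ρ x) :=
      mul_le_mul_of_nonneg_left h4 hx
    have hxx : x * (a / x + 1) = a + x := by field_simp
    calc x * ρ a ≤ x * ((a / x + 1) * ρ x) := h5
      _ = (x * (a / x + 1)) * ρ x := by ring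
      _ = (a + x) * ρ x := by rw [hxx]

/-- The purely combinatorial ℓ₁ bound: for any vector `u` and set `S` of cardinality `s`,
`‖u‖₁ · (ξ · Rs − Rc) ≤ ξ(1+ξ) ν s ‖u‖₂²`. -/
private lemma l1_cone_bound {m : ℕ} (S : Finset (Fin m)) (u : Fin m → ℝ) (ρ : ℝ → ℝ)
    (ν ξ : ℝ)
    (hρ0 : ρ 0 = 0) (hρnn : ∀ x, 0 ≤ ρ x)
    (hρsub : ∀ x y : ℝ, 0 ≤ x → 0 ≤ y → ρ (x + y) ≤ ρ x + ρ y)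
    (hρmono : ∀ x y : ℝ, 0 ≤ x → x ≤ y → ρ x ≤ ρ y)
    (hν : 0 < ν) (hρlin : ∀ x : ℝ, 0 ≤ x → ρ x ≤ ν * x) (hξ1 : 1 ≤ ξ) :
    (∑ i, |u i|) * (ξ * (∑ i ∈ S, ρ |u i|) - ∑ i ∈ Sᶜ, ρ |u i|) ≤
      ξ * (1 + ξ) * ν * (S.card : ℝ) * ∑ i, (u i) ^ 2 := by
  classical
  set A : ℝ := ∑ i ∈ S, |u i| with hA
  set X : ℝ := ∑ i ∈ Sᶜ, |u i| with hX
  set Rs : ℝ := ∑ i ∈ S, ρ |u i| with hRs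
  set Rc : ℝ := ∑ i ∈ Sᶜ, ρ |u i| with hRc
  set Qs : ℝ := ∑ i ∈ S, (u i) ^ 2 with hQs
  set Qc : ℝ := ∑ i ∈ Sᶜ, (u i) ^ 2 with hQc
  set P : ℝ := ∑ i ∈ Sᶜ, |u i| * ρ |u i| with hP
  set s : ℝ := (S.card : ℝ) with hs
  have hξ0 : (0:ℝ) ≤ ξ := by linarith
  have hA0 : 0 ≤ A := Finset.sum_nonneg fun i _ => abs_nonneg _
  have hX0 : 0 ≤ X := Finset.sum_nonneg fun i _ => abs_nonneg _
  have hRs0 : 0 ≤ Rs := Finset.sum_nonneg fun i _ => hρnn _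
  have hRc0 : 0 ≤ Rc := Finset.sum_nonneg fun i _ => hρnn _
  have hQs0 : 0 ≤ Qs := Finset.sum_nonneg fun i _ => sq_nonneg _
  have hQc0 : 0 ≤ Qc := Finset.sum_nonneg fun i _ => sq_nonneg _
  have hs0 : (0:ℝ) ≤ s := Nat.cast_nonneg _
  have htot1 : (∑ i, |u i|) = A + X := (Finset.sum_add_sum_compl S _).symm
  have htot2 : (∑ i, (u i) ^ 2) = Qs + Qc := (Finset.sum_add_sum_compl S _).symm
  -- Rs ≤ ν A
  have e1 : Rs ≤ ν * A := by
    rw [hRs, hA, Finset.mul_sum]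
    exact Finset.sum_le_sum fun i _ => hρlin _ (abs_nonneg _)
  -- Rc ≤ ν X
  have e6 : Rc ≤ ν * X := by
    rw [hRc, hX, Finset.mul_sum]
    exact Finset.sum_le_sum fun i _ => hρlin _ (abs_nonneg _)
  -- A² ≤ s Qs  (Cauchy–Schwarz)
  have e2 : A ^ 2 ≤ s * Qs := by
    have h := Finset.sum_mul_sq_le_sq_mul_sq S (fun _ => (1:ℝ)) (fun i => |u i|)
    simpa [hA, hQs, hs, sq_abs, Finset.sum_const, nsmul_eq_mul] using h
  -- P ≤ ν Qc
  have e5 : P ≤ ν * Qc := by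
    rw [hP, hQc, Finset.mul_sum]
    refine Finset.sum_le_sum fun i _ => ?_
    have h1 := hρlin |u i| (abs_nonneg _)
    have h2 : |u i| * ρ |u i| ≤ |u i| * (ν * |u i|) :=
      mul_le_mul_of_nonneg_left h1 (abs_nonneg _)
    calc |u i| * ρ |u i| ≤ |u i| * (ν * |u i|) := h2
      _ = ν * (u i) ^ 2 := by rw [← sq_abs (u i)]; ring
  -- X Rs ≤ A Rc + s P
  have e4 : X * Rs ≤ A * Rc + s * P := by
    have hj : ∀ j ∈ S, X * ρ |u j| ≤ |u j| * Rc + P := by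
      intro j _
      have hptw : ∀ i ∈ Sᶜ, |u i| * ρ |u j| ≤ |u j| * ρ |u i| + |u i| * ρ |u i| := by
        intro i _
        have h := rho_ratio ρ hρ0 hρnn hρsub hρmono |u j| |u i| (abs_nonneg _) (abs_nonneg _)
        nlinarith [h]
      calc X * ρ |u j| = ∑ i ∈ Sᶜ, |u i| * ρ |u j| := by rw [hX, Finset.sum_mul]
        _ ≤ ∑ i ∈ Sᶜ, (|u j| * ρ |u i| + |u i| * ρ |u i|) := Finset.sum_le_sum hptw
        _ = |u j| * Rc + P := by rw [Finset.sum_add_distrib, hRc, hP, Finset.mul_sum]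
    calc X * Rs = ∑ j ∈ S, X * ρ |u j| := by rw [hRs, Finset.mul_sum]
      _ ≤ ∑ j ∈ S, (|u j| * Rc + P) := Finset.sum_le_sum hj
      _ = A * Rc + s * P := by
          rw [Finset.sum_add_distrib, Finset.sum_const, nsmul_eq_mul, hA, Finset.sum_mul]
  -- (ξ-1) A Rc - X Rc ≤ ν (ξ-1)² A² / 4
  have e7 : (ξ - 1) * (A * Rc) - X * Rc ≤ ν * ((ξ - 1) ^ 2 * A ^ 2) / 4 := by
    rcases le_or_gt X ((ξ - 1) * A) with hle | hlt
    · have hfac : 0 ≤ (ξ - 1) * A - X := by linarith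
      have h1 : Rc * ((ξ - 1) * A - X) ≤ (ν * X) * ((ξ - 1) * A - X) :=
        mul_le_mul_of_nonneg_right e6 hfac
      nlinarith [h1, mul_nonneg hν.le (sq_nonneg ((ξ - 1) * A - 2 * X))]
    · have h1 : (ξ - 1) * (A * Rc) - X * Rc = Rc * ((ξ - 1) * A - X) := by ring
      have h2 : Rc * ((ξ - 1) * A - X) ≤ 0 :=
        mul_nonpos_of_nonneg_of_nonpos hRc0 (by linarith)
      have h3 : 0 ≤ ν * ((ξ - 1) ^ 2 * A ^ 2) / 4 := by positivity
      linarith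
  -- assemble
  rw [htot1, htot2]
  have t1 : ξ * (A * Rs) ≤ ξ * (ν * (s * Qs)) := by
    refine mul_le_mul_of_nonneg_left ?_ hξ0
    calc A * Rs ≤ A * (ν * A) := mul_le_mul_of_nonneg_left e1 hA0
      _ = ν * A ^ 2 := by ring
      _ ≤ ν * (s * Qs) := mul_le_mul_of_nonneg_left e2 hν.le
  have t2 : ξ * (X * Rs) ≤ ξ * (A * Rc + s * P) := mul_le_mul_of_nonneg_left e4 hξ0
  have t3 : ξ * (s * P) ≤ ξ * (s * (ν * Qc)) :=
    mul_le_mul_of_nonneg_left (mul_le_mul_of_nonneg_left e5 hs0) hξ0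
  have h6 : (ξ - 1) ^ 2 ≤ 4 * ξ ^ 2 := by nlinarith [hξ1, sq_nonneg (ξ - 1)]
  have h7 : (ξ - 1) ^ 2 * A ^ 2 ≤ 4 * ξ ^ 2 * (s * Qs) := by
    calc (ξ - 1) ^ 2 * A ^ 2 ≤ (ξ - 1) ^ 2 * (s * Qs) :=
          mul_le_mul_of_nonneg_left e2 (sq_nonneg _)
      _ ≤ 4 * ξ ^ 2 * (s * Qs) :=
          mul_le_mul_of_nonneg_right h6 (mul_nonneg hs0 hQs0)
  have h10 : ν * ((ξ - 1) ^ 2 * A ^ 2) / 4 ≤ ξ ^ 2 * (ν * (s * Qs)) := by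
    have h := mul_le_mul_of_nonneg_left h7 hν.le
    nlinarith [h]
  have h8 : 0 ≤ ξ ^ 2 * (ν * (s * Qc)) := by positivity
  linarith [t1, t2, t3, e7, h10, h8]

/-- Fixed-design ℓ₁ deviation bound: under the Gaussian width condition with constant
`δ ∈ (0,1)` and the generalized restricted eigenvalue bound `α² > 0` over the cone with
parameter `ξ = (1+δ)/(1−δ)`, any global minimizer `θ̂` of the penalized least-squares
objective satisfies `‖θ̂ − θ*‖₁ ≤ (2ξ(1+ξ)/α²) ρ'(0+) ‖θ*‖₀`. -/
theorem stmt13 (n m : ℕ) (hn : 0 < n)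
    (Z : Matrix (Fin n) (Fin m) ℝ) (w : Fin n → ℝ)
    (δ : ℝ) (hδ0 : 0 < δ) (hδ1 : δ < 1)
    (ρ : ℝ → ℝ) (hρ0 : ρ 0 = 0) (hρnn : ∀ x, 0 ≤ ρ x)
    (hρsub : ∀ x y : ℝ, 0 ≤ x → 0 ≤ y → ρ (x + y) ≤ ρ x + ρ y)
    (hρmono : ∀ x y : ℝ, 0 ≤ x → x ≤ y → ρ x ≤ ρ y)
    (ν : ℝ) (hν : 0 < ν) (hρlin : ∀ x : ℝ, 0 ≤ x → ρ x ≤ ν * x)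
    (θstar : Fin m → ℝ) (α ξ : ℝ)
    (hξ : ξ = (1 + δ) / (1 - δ)) (hα : 0 < α)
    (hGW : ∀ u : Fin m → ℝ,
      (1 / n) * |∑ k, w k * Z.mulVec u k| ≤
        δ * ((1 / (2 * n)) * (∑ k, (Z.mulVec u k) ^ 2) + ∑ i, ρ |u i|))
    (hRE : ∀ u : Fin m → ℝ,
      (∑ i ∈ (Finset.univ.filter fun i => θstar i ≠ 0)ᶜ, ρ |u i|) ≤
          ξ * ∑ i ∈ Finset.univ.filter (fun i => θstar i ≠ 0), ρ |u i| →
        α ^ 2 * ∑ i, (u i) ^ 2 ≤ (1 / n) * ∑ k, (Z.mulVec u k) ^ 2)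
    (θhat : Fin m → ℝ)
    (hmin : ∀ θ : Fin m → ℝ,
      (1 / (2 * n)) * (∑ k, ((Z.mulVec θstar + w) k - Z.mulVec θhat k) ^ 2) +
          (∑ i, ρ |θhat i|) ≤
        (1 / (2 * n)) * (∑ k, ((Z.mulVec θstar + w) k - Z.mulVec θ k) ^ 2) +
          (∑ i, ρ |θ i|)) :
    (∑ i, |θhat i - θstar i|) ≤
      (2 * ξ * (1 + ξ) / α ^ 2) * ν *
        ((Finset.univ.filter fun i => θstar i ≠ 0).card : ℝ) := by
  classical
  have hnR : (0:ℝ) < (n : ℝ) := by exact_mod_cast hn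
  have hδ1' : (0:ℝ) < 1 - δ := by linarith
  have hξ1 : (1:ℝ) ≤ ξ := by
    rw [hξ, le_div_iff₀ hδ1']
    linarith
  have hξ0 : (0:ℝ) ≤ ξ := by linarith
  set S : Finset (Fin m) := Finset.univ.filter (fun i => θstar i ≠ 0) with hS
  set u : Fin m → ℝ := θhat - θstar with hu
  have hui : ∀ i, u i = θhat i - θstar i := fun i => rfl
  set Q : ℝ := ∑ k, (Z.mulVec u k) ^ 2 with hQ
  set W : ℝ := ∑ k, w k * Z.mulVec u k with hW
  set Rs : ℝ := ∑ i ∈ S, ρ |u i| with hRs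
  set Rc : ℝ := ∑ i ∈ Sᶜ, ρ |u i| with hRc
  set L1 : ℝ := ∑ i, |u i| with hL1
  set L2 : ℝ := ∑ i, (u i) ^ 2 with hL2
  have hQ0 : 0 ≤ Q := Finset.sum_nonneg fun k _ => sq_nonneg _
  have hL2nn : 0 ≤ L2 := Finset.sum_nonneg fun i _ => sq_nonneg _
  have hRs0 : 0 ≤ Rs := Finset.sum_nonneg fun i _ => hρnn _
  have hRc0 : 0 ≤ Rc := Finset.sum_nonneg fun i _ => hρnn _
  have hZu : Z.mulVec u = Z.mulVec θhat - Z.mulVec θstar := Matrix.mulVec_sub Z θhat θstar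
  have hZuk : ∀ k, Z.mulVec θhat k = Z.mulVec θstar k + Z.mulVec u k := by
    intro k; rw [hZu]; simp
  -- basic inequality
  have key1 : (1 / (2 * (n:ℝ))) * Q + (∑ i, ρ |θhat i|) ≤
      (1 / (n:ℝ)) * W + (∑ i, ρ |θstar i|) := by
    have hb := hmin θstar
    have e1 : ∑ k, ((Z.mulVec θstar + w) k - Z.mulVec θhat k) ^ 2
        = (∑ k, (w k) ^ 2) - 2 * W + Q := by
      have hterm : ∀ k ∈ Finset.univ, ((Z.mulVec θstar + w) k - Z.mulVec θhat k) ^ 2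
          = ((w k) ^ 2 - 2 * (w k * Z.mulVec u k)) + (Z.mulVec u k) ^ 2 := by
        intro k _
        simp only [Pi.add_apply]
        rw [hZuk k]; ring
      rw [Finset.sum_congr rfl hterm, Finset.sum_add_distrib, Finset.sum_sub_distrib,
        ← Finset.mul_sum, hQ, hW]
    have e2 : ∑ k, ((Z.mulVec θstar + w) k - Z.mulVec θstar k) ^ 2 = ∑ k, (w k) ^ 2 := by
      refine Finset.sum_congr rfl fun k _ => ?_
      simp only [Pi.add_apply]
      ring
    rw [e1, e2] at hb
    have hexp : (1 / (2 * (n:ℝ))) * ((∑ k, (w k) ^ 2) - 2 * W + Q)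
        = (1 / (2 * (n:ℝ))) * (∑ k, (w k) ^ 2) - (1 / (n:ℝ)) * W
          + (1 / (2 * (n:ℝ))) * Q := by
      field_simp
    rw [hexp] at hb
    linarith
  -- GW bound
  have hsplitρu : (∑ i, ρ |u i|) = Rs + Rc := (Finset.sum_add_sum_compl S _).symm
  have hg : (1 / (n:ℝ)) * |W| ≤ δ * ((1 / (2 * (n:ℝ))) * Q + (Rs + Rc)) := by
    have h := hGW u
    rw [← hQ, ← hW, hsplitρu] at h
    exact h
  have hWle : (1 / (n:ℝ)) * W ≤ (1 / (n:ℝ)) * |W| :=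
    mul_le_mul_of_nonneg_left (le_abs_self W) (by positivity)
  -- penalty difference
  have hoff : ∀ i ∈ Sᶜ, θstar i = 0 := by
    intro i hi
    simp only [hS, Finset.mem_compl, Finset.mem_filter, Finset.mem_univ, true_and,
      not_not] at hi
    exact hi
  have key2 : (∑ i, ρ |θstar i|) - (∑ i, ρ |θhat i|) ≤ Rs - Rc := by
    have hsplit1 : (∑ i, ρ |θstar i|)
        = (∑ i ∈ S, ρ |θstar i|) + ∑ i ∈ Sᶜ, ρ |θstar i| :=
      (Finset.sum_add_sum_compl S _).symm
    have hsplit2 : (∑ i, ρ |θhat i|)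
        = (∑ i ∈ S, ρ |θhat i|) + ∑ i ∈ Sᶜ, ρ |θhat i| :=
      (Finset.sum_add_sum_compl S _).symm
    have hz1 : (∑ i ∈ Sᶜ, ρ |θstar i|) = 0 := by
      refine Finset.sum_eq_zero fun i hi => ?_
      rw [hoff i hi]
      simp [hρ0]
    have hz2 : (∑ i ∈ Sᶜ, ρ |θhat i|) = Rc := by
      rw [hRc]
      refine Finset.sum_congr rfl fun i hi => ?_
      rw [hui i, hoff i hi, sub_zero]
    have hon : (∑ i ∈ S, ρ |θstar i|) ≤ (∑ i ∈ S, ρ |θhat i|) + Rs := by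
      rw [hRs, ← Finset.sum_add_distrib]
      refine Finset.sum_le_sum fun i _ => ?_
      have habs : |θstar i| ≤ |θhat i| + |u i| := by
        have hsi : θstar i = θhat i - u i := by rw [hui i]; ring
        rw [hsi]
        exact abs_sub _ _
      calc ρ |θstar i| ≤ ρ (|θhat i| + |u i|) :=
            hρmono _ _ (abs_nonneg _) habs
        _ ≤ ρ |θhat i| + ρ |u i| := hρsub _ _ (abs_nonneg _) (abs_nonneg _)
    rw [hsplit1, hsplit2, hz1, hz2]
    linarith
  -- master inequality
  have hq0 : 0 ≤ (1 / (2 * (n:ℝ))) * Q := mul_nonneg (by positivity) hQ0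
  have key3 : (1 / (2 * (n:ℝ))) * Q + Rc ≤ ξ * Rs := by
    have hgw' : (1 / (n:ℝ)) * W ≤ δ * ((1 / (2 * (n:ℝ))) * Q + (Rs + Rc)) :=
      le_trans hWle hg
    have hmaster : (1 - δ) * ((1 / (2 * (n:ℝ))) * Q) + (1 - δ) * Rc ≤ (1 + δ) * Rs := by
      linarith [key1, key2, hgw']
    have hξeq : (1 + δ) = ξ * (1 - δ) := by
      rw [hξ]; field_simp
    rw [hξeq] at hmaster
    have hfin : (1 - δ) * ((1 / (2 * (n:ℝ))) * Q + Rc) ≤ (1 - δ) * (ξ * Rs) := by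
      linarith [hmaster]
    exact le_of_mul_le_mul_left hfin hδ1'
  have key4 : Rc ≤ ξ * Rs := by linarith [hq0, key3]
  -- restricted eigenvalue
  have key5 : α ^ 2 * L2 ≤ 2 * (ξ * Rs - Rc) := by
    have hre := hRE u key4
    rw [← hL2, ← hQ] at hre
    have hQeq : (1 / (n:ℝ)) * Q = 2 * ((1 / (2 * (n:ℝ))) * Q) := by
      field_simp
    rw [hQeq] at hre
    linarith [key3]
  -- combinatorial bound
  have key6 : L1 * (ξ * Rs - Rc) ≤ ξ * (1 + ξ) * ν * (S.card : ℝ) * L2 :=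
    l1_cone_bound S u ρ ν ξ hρ0 hρnn hρsub hρmono hν hρlin hξ1
  -- conclude
  have hα2 : (0:ℝ) < α ^ 2 := by positivity
  have hD : 0 ≤ ξ * Rs - Rc := by
    have := mul_nonneg hα2.le hL2nn
    linarith [key5]
  have hgoal : L1 ≤ (2 * ξ * (1 + ξ) / α ^ 2) * ν * (S.card : ℝ) := by
    rcases eq_or_lt_of_le hD with hD0 | hDpos
    · -- degenerate: u = 0
      have hL20 : α ^ 2 * L2 ≤ α ^ 2 * 0 := by
        rw [mul_zero]
        rw [← hD0] at key5
        linarith [key5]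
      have hL2le : L2 ≤ 0 := (mul_le_mul_iff_right₀ hα2).mp hL20
      have hL2z : L2 = 0 := le_antisymm hL2le hL2nn
      have hall := (Finset.sum_eq_zero_iff_of_nonneg
        (fun i (_ : i ∈ (Finset.univ : Finset (Fin m))) => sq_nonneg (u i))).mp hL2z
      have hL1z : L1 = 0 := by
        rw [hL1]
        refine Finset.sum_eq_zero fun i _ => ?_
        have h := hall i (Finset.mem_univ i)
        have hz : u i = 0 := sq_eq_zero_iff.mp h
        rw [hz, abs_zero]
      rw [hL1z]
      have h0 : (0:ℝ) ≤ 2 * ξ * (1 + ξ) / α ^ 2 :=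
        div_nonneg (by nlinarith [hξ1]) hα2.le
      exact mul_nonneg (mul_nonneg h0 hν.le) (Nat.cast_nonneg _)
    · have c1 : L1 * (ξ * Rs - Rc) * α ^ 2
          ≤ (ξ * (1 + ξ) * ν * (S.card : ℝ) * L2) * α ^ 2 :=
        mul_le_mul_of_nonneg_right key6 hα2.le
      have hcoef : 0 ≤ ξ * (1 + ξ) * ν * (S.card : ℝ) := by
        have : (0:ℝ) ≤ ξ * (1 + ξ) := by nlinarith [hξ1]
        exact mul_nonneg (mul_nonneg this hν.le) (Nat.cast_nonneg _)
      have c2 : (ξ * (1 + ξ) * ν * (S.card : ℝ)) * (α ^ 2 * L2) ≤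
          (ξ * (1 + ξ) * ν * (S.card : ℝ)) * (2 * (ξ * Rs - Rc)) :=
        mul_le_mul_of_nonneg_left key5 hcoef
      have hstep : (L1 * α ^ 2) * (ξ * Rs - Rc) ≤
          (2 * ξ * (1 + ξ) * ν * (S.card : ℝ)) * (ξ * Rs - Rc) := by
        linarith [c1, c2]
      have h1 : L1 * α ^ 2 ≤ 2 * ξ * (1 + ξ) * ν * (S.card : ℝ) :=
        le_of_mul_le_mul_right hstep hDpos
      rw [show (2 * ξ * (1 + ξ) / α ^ 2) * ν * ((S.card : ℝ))
          = (2 * ξ * (1 + ξ) * ν * (S.card : ℝ)) / α ^ 2 by ring, le_div_iff₀ hα2]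
      linarith [h1]
  calc (∑ i, |θhat i - θstar i|) = L1 := by
        rw [hL1]
        exact Finset.sum_congr rfl fun i _ => by rw [hui i]
    _ ≤ (2 * ξ * (1 + ξ) / α ^ 2) * ν * (S.card : ℝ) := hgoal
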